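/- Let x_{B1} ∈ H₃ be given by x_{B1}(a,b,c) = 1/√2 if (a,b,c) ∈ {(0,0,0),(0,1,1)} and 0 otherwise. Then the ℂ-linear span of {(A⊗I⊗I)x_{B1} + (I⊗B⊗I)x_{B1} + (I⊗I⊗C)x_{B1} : A,B,C ∈ sl(2,ℂ)} has complex dimension 5, and it contains x_{B1}. (Consequently the SLOCC orbit of this bi-separable Bell state has real dimension 8 in projective space.) -/

import Mathlib

open scoped BigOperators

/-- The three-qubit Hilbert space. -/
abbrev H3 := (Fin 2 × Fin 2 × Fin 2) → ℂ

/-- Squared Hermitian norm of a vector in `H3`. -/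
noncomputable def normSq3 (v : H3) : ℝ := ∑ x : Fin 2 × Fin 2 × Fin 2, Complex.normSq (v x)

/-- First one-qubit reduced density matrix. -/
noncomputable def rho1 (v : H3) : Matrix (Fin 2) (Fin 2) ℂ :=
  Matrix.of fun a a' => ∑ b : Fin 2, ∑ c : Fin 2, v (a, b, c) * star (v (a', b, c))

/-- Second one-qubit reduced density matrix. -/
noncomputable def rho2 (v : H3) : Matrix (Fin 2) (Fin 2) ℂ :=
  Matrix.of fun b b' => ∑ a : Fin 2, ∑ c : Fin 2, v (a, b, c) * star (v (a, b', c))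

/-- Third one-qubit reduced density matrix. -/
noncomputable def rho3 (v : H3) : Matrix (Fin 2) (Fin 2) ℂ :=
  Matrix.of fun c c' => ∑ a : Fin 2, ∑ b : Fin 2, v (a, b, c) * star (v (a, b, c'))

/-- Minimal (real) eigenvalue of a 2×2 complex matrix. -/
noncomputable def minEig (ρ : Matrix (Fin 2) (Fin 2) ℂ) : ℝ :=
  sInf {t : ℝ | (t : ℂ) ∈ spectrum ℂ ρ}

noncomputable def p1 (v : H3) : ℝ := minEig (rho1 v)
noncomputable def p2 (v : H3) : ℝ := minEig (rho2 v)
noncomputable def p3 (v : H3) : ℝ := minEig (rho3 v)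

/-- The action of a triple of 2×2 matrices on `H3` by the tensor product. -/
noncomputable def tensor3 (A1 A2 A3 : Matrix (Fin 2) (Fin 2) ℂ) (v : H3) : H3 :=
  fun x => ∑ a' : Fin 2, ∑ b' : Fin 2, ∑ c' : Fin 2,
    A1 x.1 a' * A2 x.2.1 b' * A3 x.2.2 c' * v (a', b', c')

/-- Local unitary equivalence of three-qubit states. -/
def LUequiv (v w : H3) : Prop :=
  ∃ U1 U2 U3 : Matrix (Fin 2) (Fin 2) ℂ,
    U1 ∈ Matrix.unitaryGroup (Fin 2) ℂ ∧ U2 ∈ Matrix.unitaryGroup (Fin 2) ℂ ∧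
    U3 ∈ Matrix.unitaryGroup (Fin 2) ℂ ∧ w = tensor3 U1 U2 U3 v

/-- The three-qubit W state. -/
noncomputable def wState : H3 := fun x =>
  if (x.1 = 1 ∧ x.2.1 = 0 ∧ x.2.2 = 0) ∨ (x.1 = 0 ∧ x.2.1 = 1 ∧ x.2.2 = 0) ∨
      (x.1 = 0 ∧ x.2.1 = 0 ∧ x.2.2 = 1)
  then ((1 / Real.sqrt 3 : ℝ) : ℂ) else 0

/-- The SLOCC class of the W state. -/
def WClass : Set H3 :=
  {v | ∃ (A1 A2 A3 : Matrix (Fin 2) (Fin 2) ℂ) (l : ℂ),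
    A1.det = 1 ∧ A2.det = 1 ∧ A3.det = 1 ∧ l ≠ 0 ∧ v = l • tensor3 A1 A2 A3 wState}

/-- The bi-separable Bell state `x_{B1}`. -/
noncomputable def xB1 : H3 := fun x =>
  if x = ((0 : Fin 2), (0 : Fin 2), (0 : Fin 2)) ∨ x = ((0 : Fin 2), (1 : Fin 2), (1 : Fin 2))
  then ((1 / Real.sqrt 2 : ℝ) : ℂ) else 0

/-- The tangent vectors at `x_{B1}` generated by `sl(2,ℂ) ⊕ sl(2,ℂ) ⊕ sl(2,ℂ)`. -/
def sl2TangentB1 : Set H3 :=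
  {u | ∃ A B C : Matrix (Fin 2) (Fin 2) ℂ, A.trace = 0 ∧ B.trace = 0 ∧ C.trace = 0 ∧
    u = tensor3 A 1 1 xB1 + tensor3 1 B 1 xB1 + tensor3 1 1 C xB1}

/-- the span of the `sl(2,ℂ)^{⊕3}`-tangent vectors at the bi-separable
Bell state has complex dimension `5` and contains the state. -/
noncomputable def sC : ℂ := ((1 / Real.sqrt 2 : ℝ) : ℂ)

noncomputable def fB : Fin 5 → H3 :=
  ![fun x => if x = ((0:Fin 2),(0:Fin 2),(0:Fin 2)) then 1 else 0,
    fun x => if x = ((0:Fin 2),(1:Fin 2),(1:Fin 2)) then 1 else 0,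
    fun x => if x = ((0:Fin 2),(0:Fin 2),(1:Fin 2)) then 1 else 0,
    fun x => if x = ((0:Fin 2),(1:Fin 2),(0:Fin 2)) then 1 else 0,
    fun x => if x = ((1:Fin 2),(0:Fin 2),(0:Fin 2)) ∨ x = ((1:Fin 2),(1:Fin 2),(1:Fin 2)) then 1 else 0]

lemma key (A B C : Matrix (Fin 2) (Fin 2) ℂ) :
    tensor3 A 1 1 xB1 + tensor3 1 B 1 xB1 + tensor3 1 1 C xB1 =
      (sC * (A 0 0 + B 0 0 + C 0 0)) • fB 0 + (sC * (A 0 0 + B 1 1 + C 1 1)) • fB 1 +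
      (sC * (B 0 1 + C 1 0)) • fB 2 + (sC * (B 1 0 + C 0 1)) • fB 3 +
      (sC * A 1 0) • fB 4 := by
  funext x
  obtain ⟨a, b, c⟩ := x
  fin_cases a <;> fin_cases b <;> fin_cases c <;>
    simp [tensor3, xB1, sC, fB, Fin.sum_univ_two, Matrix.one_apply, Prod.ext_iff] <;> ring

lemma fB_li : LinearIndependent ℂ fB := by
  rw [Fintype.linearIndependent_iff]
  intro g h
  have h0 := congrFun h ((0:Fin 2),(0:Fin 2),(0:Fin 2))
  have h1 := congrFun h ((0:Fin 2),(1:Fin 2),(1:Fin 2))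
  have h2 := congrFun h ((0:Fin 2),(0:Fin 2),(1:Fin 2))
  have h3 := congrFun h ((0:Fin 2),(1:Fin 2),(0:Fin 2))
  have h4 := congrFun h ((1:Fin 2),(0:Fin 2),(0:Fin 2))
  simp [Fin.sum_univ_five, fB, Prod.ext_iff, Matrix.vecHead, Matrix.vecTail] at h0 h1 h2 h3 h4
  intro i
  fin_cases i <;> assumption

lemma sC_ne : sC ≠ 0 := by
  simp [sC]

lemma span_eq : Submodule.span ℂ sl2TangentB1 = Submodule.span ℂ (Set.range fB) := by
  apply le_antisymm
  · rw [Submodule.span_le]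
    rintro u ⟨A, B, C, -, -, -, rfl⟩
    rw [key]
    have m : ∀ i : Fin 5, fB i ∈ Submodule.span ℂ (Set.range fB) :=
      fun i => Submodule.subset_span ⟨i, rfl⟩
    exact add_mem (add_mem (add_mem (add_mem (Submodule.smul_mem _ _ (m 0))
      (Submodule.smul_mem _ _ (m 1))) (Submodule.smul_mem _ _ (m 2)))
      (Submodule.smul_mem _ _ (m 3))) (Submodule.smul_mem _ _ (m 4))
  · have hmem : ∀ A B C : Matrix (Fin 2) (Fin 2) ℂ, A.trace = 0 → B.trace = 0 → C.trace = 0 →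
        (sC * (A 0 0 + B 0 0 + C 0 0)) • fB 0 + (sC * (A 0 0 + B 1 1 + C 1 1)) • fB 1 +
        (sC * (B 0 1 + C 1 0)) • fB 2 + (sC * (B 1 0 + C 0 1)) • fB 3 +
        (sC * A 1 0) • fB 4 ∈ Submodule.span ℂ sl2TangentB1 :=
      fun A B C hA hB hC => Submodule.subset_span ⟨A, B, C, hA, hB, hC, (key A B C).symm⟩
    have hZ1 : sC • fB 0 + sC • fB 1 ∈ Submodule.span ℂ sl2TangentB1 := by
      have := hmem (Matrix.of ![![1,0],![0,-1]]) 0 0 (by simp [Matrix.trace_fin_two]) (by simp) (by simp)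
      simpa using this
    have hZ2 : sC • fB 0 - sC • fB 1 ∈ Submodule.span ℂ sl2TangentB1 := by
      have := hmem 0 (Matrix.of ![![1,0],![0,-1]]) 0 (by simp) (by simp [Matrix.trace_fin_two]) (by simp)
      simpa [sub_eq_add_neg, neg_smul] using this
    have h2 : sC • fB 2 ∈ Submodule.span ℂ sl2TangentB1 := by
      have := hmem 0 (Matrix.of ![![0,1],![0,0]]) 0 (by simp) (by simp [Matrix.trace_fin_two]) (by simp)
      simpa using this
    have h3 : sC • fB 3 ∈ Submodule.span ℂ sl2TangentB1 := by
      have := hmem 0 (Matrix.of ![![0,0],![1,0]]) 0 (by simp) (by simp [Matrix.trace_fin_two]) (by simp)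
      simpa using this
    have h4 : sC • fB 4 ∈ Submodule.span ℂ sl2TangentB1 := by
      have := hmem (Matrix.of ![![0,0],![1,0]]) 0 0 (by simp [Matrix.trace_fin_two]) (by simp) (by simp)
      simpa using this
    have recover : ∀ v : H3, sC • v ∈ Submodule.span ℂ sl2TangentB1 →
        v ∈ Submodule.span ℂ sl2TangentB1 := by
      intro v hv
      have := Submodule.smul_mem _ sC⁻¹ hv
      rwa [inv_smul_smul₀ sC_ne] at this
    have h0' : fB 0 ∈ Submodule.span ℂ sl2TangentB1 := by
      apply recover
      have := Submodule.smul_mem _ ((2:ℂ)⁻¹) (add_mem hZ1 hZ2)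
      have he : ((2:ℂ)⁻¹) • ((sC • fB 0 + sC • fB 1) + (sC • fB 0 - sC • fB 1)) = sC • fB 0 := by
        match_scalars <;> ring
      rwa [he] at this
    have h1' : fB 1 ∈ Submodule.span ℂ sl2TangentB1 := by
      apply recover
      have := Submodule.smul_mem _ ((2:ℂ)⁻¹) (sub_mem hZ1 hZ2)
      have he : ((2:ℂ)⁻¹) • ((sC • fB 0 + sC • fB 1) - (sC • fB 0 - sC • fB 1)) = sC • fB 1 := by
        match_scalars <;> ring
      rwa [he] at this
    rw [Submodule.span_le]
    rintro u ⟨i, rfl⟩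
    fin_cases i
    · exact h0'
    · exact h1'
    · exact recover _ h2
    · exact recover _ h3
    · exact recover _ h4

theorem sl2_tangent_space_at_Bell_state :
    Module.finrank ℂ ↥(Submodule.span ℂ sl2TangentB1) = 5 ∧
    xB1 ∈ Submodule.span ℂ sl2TangentB1 := by
  constructor
  · rw [span_eq]
    simpa using finrank_span_eq_card fB_li
  · have hx2 : xB1 = tensor3 ![![1,0],![0,-1]] 1 1 xB1 + tensor3 1 0 1 xB1 +
        tensor3 1 1 0 xB1 := by
      funext x
      obtain ⟨a, b, c⟩ := x
      fin_cases a <;> fin_cases b <;> fin_cases c <;>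
        simp [tensor3, xB1, Fin.sum_univ_two, Matrix.one_apply, Prod.ext_iff]
    exact Submodule.subset_span ⟨Matrix.of ![![1,0],![0,-1]], 0, 0, by simp [Matrix.trace_fin_two],
      by simp, by simp, hx2⟩
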